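/- For m = 2 bins, every online bin stretching algorithm A satisfies sup_{I a bin-stretching instance} R(I,A) ≥ 4/3. -/

import Mathlib

/-- A bin-stretching instance for `m` bins: a finite sequence of strictly positive reals
that can be partitioned into `m` parts, each of total size at most `1`. -/
def IsBSInstance (m : ℕ) (I : List ℝ) : Prop :=
  (∀ x ∈ I, 0 < x) ∧
  ∃ P : Fin I.length → Fin m,
    ∀ i : Fin m, ∑ j ∈ Finset.univ.filter (fun j => P j = i), I.get j ≤ 1

/-- Run an online algorithm `A` (which, given the previously received items, the new item and
the current partition — as an assignment of item indices to bins — returns the bin for the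
new item) on the list of items `I`.  Returns the list of bin choices, one for each item. -/
def runBS (A : List ℝ → ℝ → (ℕ → ℕ) → ℕ) (I : List ℝ) : List ℕ :=
  (I.foldl
    (fun (acc : List ℝ × List ℕ) (x : ℝ) =>
      (acc.1 ++ [x], acc.2 ++ [A acc.1 x (fun j => acc.2.getD j 0)]))
    (([] : List ℝ), ([] : List ℕ))).2

/-- The load of bin `i` when the items of `I` are assigned to bins according to `P`. -/
def binLoad (I : List ℝ) (P : ℕ → ℕ) (i : ℕ) : ℝ :=
  ∑ j ∈ Finset.range I.length, if P j = i then I.getD j 0 else 0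

/-- The result `R(I, A)` of the algorithm `A` on the instance `I` : the load of the fullest
of the `m` bins after `A` has placed all items of `I`. -/
noncomputable def resultBS (m : ℕ) (A : List ℝ → ℝ → (ℕ → ℕ) → ℕ) (I : List ℝ) : ℝ :=
  ⨆ i : Fin m, binLoad I (fun j => (runBS A I).getD j 0) (i : ℕ)

lemma binLoad_le_two (I : List ℝ) (h : IsBSInstance 2 I) (Q : ℕ → ℕ) (i : ℕ) :
    binLoad I Q i ≤ 2 := by
  obtain ⟨hpos, P, hP⟩ := h
  have h1 : binLoad I Q i ≤ ∑ j ∈ Finset.range I.length, I.getD j 0 := by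
    apply Finset.sum_le_sum
    intro j hj
    have hjl : j < I.length := Finset.mem_range.mp hj
    have : (0:ℝ) ≤ I.getD j 0 := by
      rw [List.getD_eq_getElem _ _ hjl]
      exact le_of_lt (hpos _ (List.getElem_mem hjl))
    split; · exact le_refl _
    · exact this
  have h2 : ∑ j ∈ Finset.range I.length, I.getD j 0 = ∑ j : Fin I.length, I.get j := by
    rw [← Fin.sum_univ_eq_sum_range]
    apply Finset.sum_congr rfl
    intro j _
    rw [List.getD_eq_getElem _ _ j.isLt]
    rfl
  have h3 : ∑ j : Fin I.length, I.get j ≤ 2 := by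
    rw [← Finset.sum_fiberwise Finset.univ P (fun j => I.get j)]
    calc ∑ i : Fin 2, ∑ j ∈ Finset.univ.filter (fun j => P j = i), I.get j
        ≤ ∑ _i : Fin 2, (1:ℝ) := Finset.sum_le_sum (fun i _ => hP i)
      _ = 2 := by norm_num
  linarith

lemma inst3 : IsBSInstance 2 [1/3, 1/3, 1] := by
  constructor
  · intro x hx; fin_cases hx <;> norm_num
  · refine ⟨![0,0,1], fun i => ?_⟩
    fin_cases i <;>
    · rw [Finset.sum_filter]
      simp only [List.length_cons, List.length_nil]
      rw [Fin.sum_univ_three]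
      norm_num [List.get, Matrix.cons_val_two, Matrix.vecHead, Matrix.vecTail]

lemma inst4 : IsBSInstance 2 [1/3, 1/3, 2/3, 2/3] := by
  constructor
  · intro x hx; fin_cases hx <;> norm_num
  · refine ⟨![0,1,0,1], fun i => ?_⟩
    fin_cases i <;>
    · rw [Finset.sum_filter]
      simp only [List.length_cons, List.length_nil]
      rw [Fin.sum_univ_four]
      norm_num [List.get, Matrix.cons_val_two, Matrix.cons_val_three, Matrix.vecHead, Matrix.vecTail]

lemma runBS_three (A : List ℝ → ℝ → (ℕ → ℕ) → ℕ) (x y z : ℝ) :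
    runBS A [x,y,z] = [A [] x (fun _ => 0),
      A [x] y (fun j => [A [] x (fun _ => 0)].getD j 0),
      A [x,y] z (fun j => [A [] x (fun _ => 0),
        A [x] y (fun j => [A [] x (fun _ => 0)].getD j 0)].getD j 0)] := by
  simp [runBS]

lemma runBS_four (A : List ℝ → ℝ → (ℕ → ℕ) → ℕ) (x y z w : ℝ) :
    runBS A [x,y,z,w] = [A [] x (fun _ => 0),
      A [x] y (fun j => [A [] x (fun _ => 0)].getD j 0),
      A [x,y] z (fun j => [A [] x (fun _ => 0),
        A [x] y (fun j => [A [] x (fun _ => 0)].getD j 0)].getD j 0),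
      A [x,y,z] w (fun j => [A [] x (fun _ => 0),
        A [x] y (fun j => [A [] x (fun _ => 0)].getD j 0),
        A [x,y] z (fun j => [A [] x (fun _ => 0),
          A [x] y (fun j => [A [] x (fun _ => 0)].getD j 0)].getD j 0)].getD j 0)] := by
  simp [runBS]

lemma binLoad3 (x y z : ℝ) (p q r i : ℕ) :
    binLoad [x,y,z] (fun j => [p,q,r].getD j 0) i =
      (if p = i then x else 0) + (if q = i then y else 0) + (if r = i then z else 0) := by
  simp [binLoad, Finset.sum_range_succ]

lemma binLoad4 (x y z w : ℝ) (p q r s i : ℕ) :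
    binLoad [x,y,z,w] (fun j => [p,q,r,s].getD j 0) i =
      (if p = i then x else 0) + (if q = i then y else 0) + (if r = i then z else 0)
        + (if s = i then w else 0) := by
  simp [binLoad, Finset.sum_range_succ]


/-- For `m = 2` bins, every online bin stretching algorithm `A` satisfies
`sup_I R(I, A) ≥ 4/3`, the supremum being over all bin-stretching instances `I`. -/
theorem two_bins_lower_bound (A : List ℝ → ℝ → (ℕ → ℕ) → ℕ)
    (hA : ∀ I y P, A I y P < 2) :
    (4 : ℝ) / 3 ≤ sSup {r : ℝ | ∃ I : List ℝ, IsBSInstance 2 I ∧ resultBS 2 A I = r} := by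
  have hBdd : BddAbove {r : ℝ | ∃ I : List ℝ, IsBSInstance 2 I ∧ resultBS 2 A I = r} := by
    refine ⟨2, ?_⟩
    rintro r ⟨I, hI, rfl⟩
    exact ciSup_le fun i => binLoad_le_two I hI _ _
  obtain ⟨b0, hb0⟩ : ∃ b, A [] (1/3:ℝ) (fun _ => 0) = b := ⟨_, rfl⟩
  have hb0v : b0 = 0 ∨ b0 = 1 := by
    have h := hA [] (1/3:ℝ) (fun _ => 0); rw [hb0] at h; omega
  obtain ⟨b1, hb1⟩ : ∃ b, A [(1/3:ℝ)] (1/3:ℝ) (fun j => [b0].getD j 0) = b := ⟨_, rfl⟩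
  have hb1v : b1 = 0 ∨ b1 = 1 := by
    have h := hA [(1/3:ℝ)] (1/3:ℝ) (fun j => [b0].getD j 0); rw [hb1] at h; omega
  by_cases hne : b1 = b0
  · subst hne
    obtain ⟨c, hc⟩ : ∃ b, A [(1/3:ℝ),(1/3:ℝ)] (2/3:ℝ) (fun j => [b1,b1].getD j 0) = b :=
      ⟨_, rfl⟩
    have hcv : c = 0 ∨ c = 1 := by
      have h := hA [(1/3:ℝ),(1/3:ℝ)] (2/3:ℝ) (fun j => [b1,b1].getD j 0); rw [hc] at h; omega
    obtain ⟨d, hd⟩ :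
        ∃ b, A [(1/3:ℝ),(1/3:ℝ),(2/3:ℝ)] (2/3:ℝ) (fun j => [b1,b1,c].getD j 0) = b :=
      ⟨_, rfl⟩
    have hdv : d = 0 ∨ d = 1 := by
      have h := hA [(1/3:ℝ),(1/3:ℝ),(2/3:ℝ)] (2/3:ℝ) (fun j => [b1,b1,c].getD j 0)
      rw [hd] at h; omega
    have hrun : runBS A [1/3, 1/3, 2/3, 2/3] = [b1, b1, c, d] := by
      rw [runBS_four]
      simp only [hb0]; simp only [hb1]; simp only [hc]; simp only [hd]
    refine le_csSup_of_le hBdd ⟨[1/3, 1/3, 2/3, 2/3], inst4, rfl⟩ ?_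
    simp only [resultBS, hrun]
    rcases hb1v with rfl|rfl <;> rcases hcv with rfl|rfl <;> rcases hdv with rfl|rfl <;>
      first
      | (refine le_trans ?_ (le_ciSup (Finite.bddAbove_range _) (0 : Fin 2))
         simp only [binLoad4, Fin.val_zero]; norm_num; done)
      | (refine le_trans ?_ (le_ciSup (Finite.bddAbove_range _) (1 : Fin 2))
         simp only [binLoad4, Fin.val_one]; norm_num; done)
  · obtain ⟨b2, hb2⟩ :
        ∃ b, A [(1/3:ℝ),(1/3:ℝ)] (1:ℝ) (fun j => [b0,b1].getD j 0) = b := ⟨_, rfl⟩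
    have hb2v : b2 = 0 ∨ b2 = 1 := by
      have h := hA [(1/3:ℝ),(1/3:ℝ)] (1:ℝ) (fun j => [b0,b1].getD j 0); rw [hb2] at h; omega
    have hrun : runBS A [1/3, 1/3, 1] = [b0, b1, b2] := by
      rw [runBS_three]
      simp only [hb0]; simp only [hb1]; simp only [hb2]
    refine le_csSup_of_le hBdd ⟨[1/3, 1/3, 1], inst3, rfl⟩ ?_
    simp only [resultBS, hrun]
    rcases hb0v with rfl|rfl <;> rcases hb1v with rfl|rfl <;> rcases hb2v with rfl|rfl <;>
      first
      | (exact absurd rfl hne)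
      | (refine le_trans ?_ (le_ciSup (Finite.bddAbove_range _) (0 : Fin 2))
         simp only [binLoad3, Fin.val_zero]; norm_num; done)
      | (refine le_trans ?_ (le_ciSup (Finite.bddAbove_range _) (1 : Fin 2))
         simp only [binLoad3, Fin.val_one]; norm_num; done)
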